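/- (Coverability bounds the sequential extrapolation coefficient, abstract form.) Let Z be a countable set, Ψ a set of functions Z → [0,1], and D a set of probability distributions on Z with coverability coefficient C := inf_μ sup_{d ∈ D} ||d/μ||_∞ < ∞ attained by some μ*. Then for any sequences ψ^(1),...,ψ^(T) ∈ Ψ and d^(1),...,d^(T) ∈ D, sum_{t=1}^T (E_{d^(t)}[ψ^(t)])² / max(1, sum_{i<t} E_{d^(i)}[(ψ^(t))²]) ≤ K·C·log(T+1) + K·C for some universal constant K (e.g., K = 16). -/

import Mathlib

lemma half_le_log (x : ℝ) (h0 : 0 ≤ x) (h1 : x ≤ 1) : x ≤ 2 * Real.log (1 + x) := by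
  have hx : (0:ℝ) < 1 + x := by linarith
  have h2 : Real.exp (x/2) ≤ 1 + x := by
    have ha : 1 - x/2 ≤ Real.exp (-(x/2)) := by
      have := Real.add_one_le_exp (-(x/2)); linarith
    have hb : (0:ℝ) < 1 - x/2 := by linarith
    have hc : Real.exp (x/2) ≤ 1 / (1 - x/2) := by
      rw [le_div_iff₀ hb]
      calc Real.exp (x/2) * (1 - x/2) ≤ Real.exp (x/2) * Real.exp (-(x/2)) := by
            apply mul_le_mul_of_nonneg_left ha (Real.exp_nonneg _)
        _ = 1 := by rw [← Real.exp_add]; simp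
    refine hc.trans ?_
    rw [div_le_iff₀ hb]
    nlinarith
  have := Real.le_log_iff_exp_le hx |>.mpr h2
  linarith

/-- AM-GM consequence. -/
lemma sq_le_of_forall (x q M : ℝ) (hx : 0 ≤ x) (hq : 0 ≤ q) (hM : 0 < M)
    (h : ∀ l : ℝ, 0 < l → x ≤ (l * M + q / l) / 2) : x ^ 2 ≤ q * M := by
  rcases eq_or_lt_of_le hx with h0 | h0
  · rw [← h0]; simpa using mul_nonneg hq hM.le
  · have h1 := h (x / M) (by positivity)
    have e1 : x / M * M = x := div_mul_cancel₀ x hM.ne'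
    rw [e1] at h1
    have h2 : x / 2 ≤ q / (x / M) / 2 := by linarith
    have h3 : x ≤ q / (x / M) := by linarith
    have h4 : x * (x / M) ≤ q := by
      rw [← le_div_iff₀ (by positivity)]; exact h3
    calc x ^ 2 = (x * (x / M)) * M := by field_simp [sq]
      _ ≤ q * M := by apply mul_le_mul_of_nonneg_right h4 hM.le

lemma log_sum_bound (a : ℕ → ℝ) (c : ℝ) (hc : 0 < c) (h0 : ∀ i, 0 ≤ a i)
    (h1 : ∀ i, a i ≤ c) (n : ℕ) :
    ∑ t ∈ Finset.range n, a t / ((∑ i ∈ Finset.range t, a i) + c)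
      ≤ 2 * (Real.log ((∑ i ∈ Finset.range n, a i) + c) - Real.log c) := by
  induction n with
  | zero => simp
  | succ n ih =>
    rw [Finset.sum_range_succ, Finset.sum_range_succ (f := a)]
    set A := ∑ i ∈ Finset.range n, a i with hA
    have hA0 : 0 ≤ A := Finset.sum_nonneg fun i _ => h0 i
    have hAc : 0 < A + c := by linarith
    have key : a n / (A + c) ≤ 2 * (Real.log (A + a n + c) - Real.log (A + c)) := by
      have hx0 : 0 ≤ a n / (A + c) := div_nonneg (h0 n) hAc.le
      have hx1 : a n / (A + c) ≤ 1 := by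
        rw [div_le_one hAc]; have := h1 n; linarith
      have := half_le_log (a n / (A + c)) hx0 hx1
      have e : 1 + a n / (A + c) = (A + a n + c) / (A + c) := by field_simp; ring
      rw [e, Real.log_div (by have := h0 n; linarith : A + a n + c ≠ 0) hAc.ne'] at this
      linarith
    linarith

lemma log_sum_bound' (T : ℕ) (a : ℕ → ℝ) (c : ℝ) (hc : 0 < c) (h0 : ∀ i, 0 ≤ a i)
    (h1 : ∀ i, a i ≤ c) :
    ∑ t ∈ Finset.range T, a t / ((∑ i ∈ Finset.range t, a i) + c)
      ≤ 2 * Real.log (T + 1) := by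
  refine (log_sum_bound a c hc h0 h1 T).trans ?_
  have hS : (∑ i ∈ Finset.range T, a i) ≤ T * c := by
    calc (∑ i ∈ Finset.range T, a i) ≤ ∑ i ∈ Finset.range T, c :=
          Finset.sum_le_sum fun i _ => h1 i
      _ = T * c := by simp [mul_comm]
  have hS0 : 0 ≤ ∑ i ∈ Finset.range T, a i := Finset.sum_nonneg fun i _ => h0 i
  have hlog : Real.log ((∑ i ∈ Finset.range T, a i) + c) ≤ Real.log ((T + 1) * c) := by
    apply Real.log_le_log (by linarith)
    have : (T:ℝ) * c + c = (T + 1) * c := by ring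
    linarith
  rw [Real.log_mul (by positivity) hc.ne'] at hlog
  linarith

lemma burnin_bound (T : ℕ) (a : ℕ → ℝ) (c : ℝ) (hc : 0 < c) (h0 : ∀ i, 0 ≤ a i)
    (h1 : ∀ i, a i ≤ c) :
    ∑ t ∈ Finset.range T, (if (∑ i ∈ Finset.range t, a i) < c then a t else 0)
      ≤ 2 * c := by
  have key : ∀ n, ∑ t ∈ Finset.range n, (if (∑ i ∈ Finset.range t, a i) < c then a t else 0)
      ≤ min (∑ i ∈ Finset.range n, a i) (2 * c) := by
    intro n
    induction n with
    | zero => simp; positivity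
    | succ n ih =>
      rw [Finset.sum_range_succ, Finset.sum_range_succ (f := a)]
      set A := ∑ i ∈ Finset.range n, a i with hA
      by_cases h : A < c
      · simp only [if_pos h]
        apply le_min
        · have := (ih.trans (min_le_left _ _)); linarith
        · have := (ih.trans (min_le_left _ _)); have := h1 n; linarith
      · simp only [if_neg h]
        rw [add_zero]
        refine ih.trans (le_min ?_ (min_le_right _ _))
        have := h0 n
        have := min_le_left A (2*c)
        linarith
  exact (key T).trans (min_le_right _ _)

lemma key_pointwise (c dcur dbar p l : ℝ) (hc : 0 ≤ c) (hd : 0 ≤ dcur) (hdb : 0 ≤ dbar)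
    (hdc : dcur ≤ c) (hp : 0 ≤ p) (hp1 : p ≤ 1) (hl : 0 < l) :
    dcur * p * min 1 (dbar / c)
      ≤ (l * (dbar * p ^ 2) + (2 * c * (dcur / (dbar + c))) / l) / 2 := by
  rcases eq_or_lt_of_le hc with hc0 | hc0
  · -- c = 0 ⟹ dcur = 0
    have : dcur = 0 := le_antisymm (hdc.trans hc0.symm.le) hd
    rw [this]
    have : (0:ℝ) ≤ l * (dbar * p ^ 2) := by positivity
    simp
    positivity
  rcases eq_or_lt_of_le hdb with hdb0 | hdb0
  · -- dbar = 0 ⟹ min = 0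
    rw [← hdb0]
    have : min 1 ((0:ℝ) / c) = 0 := by simp
    rw [this, mul_zero]
    have h1 : (0:ℝ) ≤ dcur / (0 + c) := by positivity
    positivity
  · set m := min 1 (dbar / c) with hm
    have hm0 : 0 ≤ m := le_min zero_le_one (by positivity)
    have hm1 : m ≤ 1 := min_le_left _ _
    have hbc : 0 < dbar + c := by linarith
    have sub : dcur ^ 2 * m ^ 2 / dbar ≤ 2 * c * (dcur / (dbar + c)) := by
      have e : 2 * c * (dcur / (dbar + c)) = 2 * c * dcur / (dbar + c) :=
        (mul_div_assoc _ _ _).symm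
      rw [e, div_le_div_iff₀ hdb0 hbc]
      rcases le_or_gt c dbar with hcase | hcase
      · have hm : m = 1 := by
          rw [hm, min_eq_left]; rw [le_div_iff₀ hc0]; linarith
        rw [hm]
        nlinarith [mul_nonneg hd hdb0.le, mul_nonneg hd hc0.le,
          mul_nonneg (mul_nonneg hd hd) hc0.le]
      · have hm : m = dbar / c := by
          rw [hm, min_eq_right]; rw [div_le_one hc0]; linarith
        rw [hm, div_pow]
        have e2 : dcur ^ 2 * (dbar ^ 2 / c ^ 2) * (dbar + c)
            = dcur ^ 2 * dbar ^ 2 * (dbar + c) / c ^ 2 := by ring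
        rw [e2, div_le_iff₀ (by positivity)]
        have f1 : 0 ≤ (c - dcur) * (dbar ^ 2 * (dbar + c)) := by
          apply mul_nonneg (by linarith); positivity
        have f2 : 0 ≤ (c - dbar) * (c * dcur * dbar * (dbar + c)) := by
          apply mul_nonneg (by linarith); positivity
        have f3 : 0 ≤ (c - dbar) * (c * c * dcur * dbar) := by
          apply mul_nonneg (by linarith); positivity
        nlinarith [f1, f2, f3]
    have g1 : 2 * l * (dcur * p * m) * dbar
        ≤ (l ^ 2 * (dbar * p ^ 2) + dcur ^ 2 * m ^ 2 / dbar) * dbar := by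
      have hdd : dcur ^ 2 * m ^ 2 / dbar * dbar = dcur ^ 2 * m ^ 2 :=
        div_mul_cancel₀ _ hdb0.ne'
      nlinarith [sq_nonneg (l * dbar * p - dcur * m)]
    have g2 : 2 * l * (dcur * p * m)
        ≤ l ^ 2 * (dbar * p ^ 2) + dcur ^ 2 * m ^ 2 / dbar :=
      le_of_mul_le_mul_right g1 hdb0
    have expand : (l * (dbar * p ^ 2) + (2 * c * (dcur / (dbar + c))) / l) / 2
        = (l ^ 2 * (dbar * p ^ 2) + 2 * c * (dcur / (dbar + c))) / (2 * l) := by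
      field_simp
    rw [expand, le_div_iff₀ (by positivity)]
    linarith

lemma split_pointwise (c dcur dbar p : ℝ) (hd : 0 ≤ dcur) (hdb : 0 ≤ dbar)
    (hdc : dcur ≤ c) (hp0 : 0 ≤ p) (hp1 : p ≤ 1) :
    dcur * p ≤ dcur * p * min 1 (dbar / c) + (if dbar < c then dcur else 0) := by
  by_cases h : dbar < c
  · rw [if_pos h]
    have hc0 : 0 < c := lt_of_le_of_lt hdb h
    have hm0 : 0 ≤ min 1 (dbar / c) := le_min zero_le_one (by positivity)
    nlinarith [mul_nonneg (mul_nonneg hd (by linarith : (0:ℝ) ≤ 1 - p))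
        (by linarith [min_le_left 1 (dbar/c)] : (0:ℝ) ≤ 1 - min 1 (dbar / c)),
      mul_nonneg hd hm0, mul_nonneg hd hp0]
  · rw [if_neg h]
    push_neg at h
    rcases le_or_gt c 0 with hc0 | hc0
    · have : dcur = 0 := le_antisymm (hdc.trans hc0) hd
      simp [this]
    · have : min 1 (dbar / c) = 1 := min_eq_left (by rw [le_div_iff₀ hc0]; linarith)
      rw [this, mul_one, add_zero]

lemma fin_Iio_to_range {T : ℕ} (t : Fin T) (g : ℕ → ℝ) :
    ∑ i ∈ Finset.Iio t, g i.val = ∑ n ∈ Finset.range t.val, g n := by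
  rw [← Nat.Iio_eq_range, ← Fin.map_valEmbedding_Iio, Finset.sum_map]
  rfl

/-- Coverability bounds the sequential extrapolation coefficient (abstract form),
with universal constant `K = 16`. -/
theorem sec_le_coverability
    {Z : Type*} [Countable Z] {T : ℕ}
    (Ψ : Set (Z → ℝ)) (hΨ : ∀ ψ ∈ Ψ, ∀ z, ψ z ∈ Set.Icc (0 : ℝ) 1)
    (D : Set (Z → ℝ)) (hDd : ∀ d ∈ D, (∀ z, 0 ≤ d z) ∧ ∑' z, d z = 1)
    (C : ℝ) (hC : 0 < C)
    (μstar : Z → ℝ) (hμ0 : ∀ z, 0 ≤ μstar z) (hμsum : ∑' z, μstar z = 1)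
    (hcov : ∀ d ∈ D, ∀ z, d z ≤ C * μstar z)
    (ψ : Fin T → Z → ℝ) (hψ : ∀ t, ψ t ∈ Ψ)
    (d : Fin T → Z → ℝ) (hd : ∀ t, d t ∈ D) :
    ∑ t : Fin T,
        (∑' z, d t z * ψ t z) ^ 2
          / max 1 (∑ i ∈ Finset.Iio t, ∑' z, d i z * (ψ t z) ^ 2)
      ≤ 16 * C * Real.log (T + 1) + 16 * C := by
  -- basic facts
  have hψ0 : ∀ t z, 0 ≤ ψ t z := fun t z => (hΨ _ (hψ t) z).1
  have hψ1 : ∀ t z, ψ t z ≤ 1 := fun t z => (hΨ _ (hψ t) z).2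
  have hd0 : ∀ t z, 0 ≤ d t z := fun t z => (hDd _ (hd t)).1 z
  have hdsum : ∀ t, ∑' z, d t z = 1 := fun t => (hDd _ (hd t)).2
  have hdc : ∀ t z, d t z ≤ C * μstar z := fun t z => hcov _ (hd t) z
  -- summability
  have hμS : Summable μstar := by
    by_contra h
    rw [tsum_eq_zero_of_not_summable h] at hμsum
    exact one_ne_zero hμsum.symm
  have hdS : ∀ t, Summable (d t) := by
    intro t
    by_contra h
    have := hdsum t
    rw [tsum_eq_zero_of_not_summable h] at this
    exact one_ne_zero this.symm
  -- abbreviations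
  set dbar : Fin T → Z → ℝ := fun t z => ∑ i ∈ Finset.Iio t, d i z with hdbar_def
  have hdbar0 : ∀ t z, 0 ≤ dbar t z := fun t z =>
    Finset.sum_nonneg fun i _ => hd0 i z
  have hdbarS : ∀ t, Summable (dbar t) := by
    intro t
    apply summable_sum (fun i _ => hdS i)
  set mn : Fin T → Z → ℝ := fun t z => min 1 (dbar t z / (C * μstar z)) with hmn_def
  have hmn0 : ∀ t z, 0 ≤ mn t z := fun t z =>
    le_min zero_le_one (div_nonneg (hdbar0 t z) (mul_nonneg hC.le (hμ0 z)))
  have hmn1 : ∀ t z, mn t z ≤ 1 := fun t z => min_le_left _ _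
  set S : Fin T → ℝ :=
    fun t => ∑' z, μstar z * (d t z / (dbar t z + C * μstar z)) with hS_def
  set bb : Fin T → ℝ :=
    fun t => ∑' z, (if dbar t z < C * μstar z then d t z else 0) with hbb_def
  set a : Fin T → ℝ := fun t => ∑' z, d t z * ψ t z * mn t z with ha_def
  set Q : Fin T → ℝ :=
    fun t => ∑ i ∈ Finset.Iio t, ∑' z, d i z * (ψ t z) ^ 2 with hQ_def
  -- summability of various integrands
  have hSintS : ∀ t, Summable (fun z => μstar z * (d t z / (dbar t z + C * μstar z))) := by
    intro t
    apply Summable.of_nonneg_of_le (fun z => mul_nonneg (hμ0 z)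
      (div_nonneg (hd0 t z) (add_nonneg (hdbar0 t z) (mul_nonneg hC.le (hμ0 z))))) _ hμS
    intro z
    rcases eq_or_lt_of_le (add_nonneg (hdbar0 t z) (mul_nonneg hC.le (hμ0 z))) with h0 | h0
    · rw [← h0, div_zero, mul_zero]; exact hμ0 z
    · have : d t z / (dbar t z + C * μstar z) ≤ 1 := by
        rw [div_le_one h0]
        have := hdc t z; have := hdbar0 t z; linarith
      calc μstar z * (d t z / (dbar t z + C * μstar z)) ≤ μstar z * 1 :=
            mul_le_mul_of_nonneg_left this (hμ0 z)
        _ = μstar z := mul_one _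
  have hbintS : ∀ t, Summable (fun z => if dbar t z < C * μstar z then d t z else 0) := by
    intro t
    apply Summable.of_nonneg_of_le (fun z => by split <;> simp [hd0 t z]) _ (hdS t)
    intro z; split
    · exact le_refl _
    · exact hd0 t z
  have hdψS : ∀ t, Summable (fun z => d t z * ψ t z) := by
    intro t
    apply Summable.of_nonneg_of_le (fun z => mul_nonneg (hd0 t z) (hψ0 t z)) _ (hdS t)
    intro z
    exact mul_le_of_le_one_right (hd0 t z) (hψ1 t z)
  have hdψmS : ∀ t, Summable (fun z => d t z * ψ t z * mn t z) := by
    intro t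
    apply Summable.of_nonneg_of_le
      (fun z => mul_nonneg (mul_nonneg (hd0 t z) (hψ0 t z)) (hmn0 t z)) _ (hdS t)
    intro z
    calc d t z * ψ t z * mn t z ≤ d t z * ψ t z * 1 :=
          mul_le_mul_of_nonneg_left (hmn1 t z) (mul_nonneg (hd0 t z) (hψ0 t z))
      _ ≤ d t z := by rw [mul_one]; exact mul_le_of_le_one_right (hd0 t z) (hψ1 t z)
  have hdbψS : ∀ s t : Fin T, Summable (fun z => dbar t z * (ψ s z) ^ 2) := by
    intro s t
    apply Summable.of_nonneg_of_le
      (fun z => mul_nonneg (hdbar0 t z) (sq_nonneg _)) _ (hdbarS t)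
    intro z
    apply mul_le_of_le_one_right (hdbar0 t z)
    calc (ψ s z) ^ 2 ≤ 1 ^ 2 := pow_le_pow_left₀ (hψ0 s z) (hψ1 s z) 2
      _ = 1 := one_pow 2
  have hdψsqS : ∀ s t : Fin T, Summable (fun z => d t z * (ψ s z) ^ 2) := by
    intro s t
    apply Summable.of_nonneg_of_le
      (fun z => mul_nonneg (hd0 t z) (sq_nonneg _)) _ (hdS t)
    intro z
    apply mul_le_of_le_one_right (hd0 t z)
    calc (ψ s z) ^ 2 ≤ 1 ^ 2 := pow_le_pow_left₀ (hψ0 s z) (hψ1 s z) 2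
      _ = 1 := one_pow 2
  -- nonnegativity facts
  have hE0 : ∀ t, 0 ≤ ∑' z, d t z * ψ t z := fun t =>
    tsum_nonneg fun z => mul_nonneg (hd0 t z) (hψ0 t z)
  have ha0 : ∀ t, 0 ≤ a t := fun t =>
    tsum_nonneg fun z => mul_nonneg (mul_nonneg (hd0 t z) (hψ0 t z)) (hmn0 t z)
  have hb0 : ∀ t, 0 ≤ bb t :=
    fun t => tsum_nonneg fun z => by split
                                     · exact hd0 t z
                                     · exact le_refl 0
  have hb1 : ∀ t, bb t ≤ 1 := by
    intro t
    have : bb t ≤ ∑' z, d t z := by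
      apply Summable.tsum_le_tsum _ (hbintS t) (hdS t)
      intro z
      split
      · exact le_refl _
      · exact hd0 t z
    rw [hdsum t] at this
    exact this
  have hS0 : ∀ t, 0 ≤ S t := fun t =>
    tsum_nonneg fun z => mul_nonneg (hμ0 z)
      (div_nonneg (hd0 t z) (add_nonneg (hdbar0 t z) (mul_nonneg hC.le (hμ0 z))))
  -- Step A : the per-round bound
  have keyA : ∀ t : Fin T,
      (∑' z, d t z * ψ t z) ^ 2 / max 1 (Q t) ≤ 4 * C * S t + 2 * bb t := by
    intro t
    set M := max 1 (Q t) with hM_def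
    have hM1 : (1:ℝ) ≤ M := le_max_left _ _
    have hM0 : (0:ℝ) < M := lt_of_lt_of_le zero_lt_one hM1
    have hPQ : (∑' z, dbar t z * (ψ t z) ^ 2) = Q t := by
      simp only [hQ_def, hdbar_def]
      rw [← Summable.tsum_finsetSum (fun i _ => hdψsqS t i)]
      congr 1; funext z
      rw [Finset.sum_mul]
    have hPM : (∑' z, dbar t z * (ψ t z) ^ 2) ≤ M := by
      rw [hPQ]; exact le_max_right _ _
    have hEab : (∑' z, d t z * ψ t z) ≤ a t + bb t := by
      have h := Summable.tsum_le_tsum (f := fun z => d t z * ψ t z)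
        (g := fun z => d t z * ψ t z * mn t z
          + (if dbar t z < C * μstar z then d t z else 0))
        (fun z => split_pointwise (C * μstar z) (d t z) (dbar t z) (ψ t z)
          (hd0 t z) (hdbar0 t z) (hdc t z) (hψ0 t z) (hψ1 t z))
        (hdψS t) ((hdψmS t).add (hbintS t))
      rw [Summable.tsum_add (hdψmS t) (hbintS t)] at h
      exact h
    have hamgm : ∀ l : ℝ, 0 < l → a t ≤ (l * M + (2 * C * S t) / l) / 2 := by
      intro l hl
      have pw : ∀ z, d t z * ψ t z * mn t z
          ≤ (l / 2) * (dbar t z * (ψ t z) ^ 2)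
            + (C / l) * (μstar z * (d t z / (dbar t z + C * μstar z))) := by
        intro z
        have h := key_pointwise (C * μstar z) (d t z) (dbar t z) (ψ t z) l
          (mul_nonneg hC.le (hμ0 z)) (hd0 t z) (hdbar0 t z) (hdc t z)
          (hψ0 t z) (hψ1 t z) hl
        calc d t z * ψ t z * mn t z
            ≤ (l * (dbar t z * (ψ t z) ^ 2)
              + (2 * (C * μstar z) * (d t z / (dbar t z + C * μstar z))) / l) / 2 := h
          _ = (l / 2) * (dbar t z * (ψ t z) ^ 2)
              + (C / l) * (μstar z * (d t z / (dbar t z + C * μstar z))) := by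
              field_simp
      have hsum : ∑' z, ((l / 2) * (dbar t z * (ψ t z) ^ 2)
            + (C / l) * (μstar z * (d t z / (dbar t z + C * μstar z))))
          = (l / 2) * (∑' z, dbar t z * (ψ t z) ^ 2) + (C / l) * S t := by
        rw [Summable.tsum_add (((hdbψS t t)).mul_left _) ((hSintS t).mul_left _),
          tsum_mul_left, tsum_mul_left]
      have hle := Summable.tsum_le_tsum pw (hdψmS t)
        (((hdbψS t t).mul_left _).add ((hSintS t).mul_left _))
      rw [hsum] at hle
      calc a t ≤ (l / 2) * (∑' z, dbar t z * (ψ t z) ^ 2) + (C / l) * S t := hle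
        _ ≤ (l / 2) * M + (C / l) * S t := by
            have h2 : (0:ℝ) ≤ l / 2 := by positivity
            exact add_le_add_left (mul_le_mul_of_nonneg_left hPM h2) _
        _ = (l * M + (2 * C * S t) / l) / 2 := by field_simp
    have hq0 : 0 ≤ 2 * C * S t := mul_nonneg (by linarith) (hS0 t)
    have ha2 : a t ^ 2 ≤ (2 * C * S t) * M :=
      sq_le_of_forall _ _ _ (ha0 t) hq0 hM0 hamgm
    have hEsq : (∑' z, d t z * ψ t z) ^ 2 ≤ 2 * a t ^ 2 + 2 * bb t ^ 2 := by
      have h1 : (∑' z, d t z * ψ t z) ^ 2 ≤ (a t + bb t) ^ 2 :=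
        pow_le_pow_left₀ (hE0 t) hEab 2
      nlinarith [sq_nonneg (a t - bb t)]
    rw [div_le_iff₀ hM0]
    have hbM : bb t ^ 2 ≤ bb t * M := by
      have : bb t * bb t ≤ bb t * M :=
        mul_le_mul_of_nonneg_left ((hb1 t).trans hM1) (hb0 t)
      calc bb t ^ 2 = bb t * bb t := sq (bb t)
        _ ≤ bb t * M := this
    nlinarith [ha2, hbM, hEsq]
  -- per-z sequence on ℕ
  set g : Z → ℕ → ℝ := fun z n => if h : n < T then d ⟨n, h⟩ z else 0 with hg_def
  have hg0 : ∀ z n, 0 ≤ g z n := by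
    intro z n
    simp only [hg_def]
    split
    · exact hd0 _ z
    · exact le_refl 0
  have hgc : ∀ z n, g z n ≤ C * μstar z := by
    intro z n
    simp only [hg_def]
    split
    · exact hdc _ z
    · exact mul_nonneg hC.le (hμ0 z)
  have hgt : ∀ z (t : Fin T), g z t.val = d t z := by
    intro z t
    simp only [hg_def, t.isLt, dif_pos, Fin.eta]
  have hdbar_g : ∀ z (t : Fin T), dbar t z = ∑ i ∈ Finset.range t.val, g z i := by
    intro z t
    rw [← fin_Iio_to_range t (g z)]
    simp only [hdbar_def]
    exact Finset.sum_congr rfl fun i _ => (hgt z i).symm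
  -- Step B : ∑ S ≤ 2 log (T+1)
  have hlogT : (0:ℝ) ≤ Real.log (T + 1) := by
    apply Real.log_nonneg
    have : (0:ℝ) ≤ (T:ℝ) := Nat.cast_nonneg T
    linarith
  have stepB : ∑ t : Fin T, S t ≤ 2 * Real.log (T + 1) := by
    have swap : ∑ t : Fin T, S t
        = ∑' z, ∑ t : Fin T, μstar z * (d t z / (dbar t z + C * μstar z)) :=
      (Summable.tsum_finsetSum (fun t _ => hSintS t)).symm
    have hz : ∀ z, (∑ t : Fin T, μstar z * (d t z / (dbar t z + C * μstar z)))
        ≤ μstar z * (2 * Real.log (T + 1)) := by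
      intro z
      rw [← Finset.mul_sum]
      rcases eq_or_lt_of_le (hμ0 z) with h0 | h0
      · rw [← h0, zero_mul, zero_mul]
      apply mul_le_mul_of_nonneg_left _ (hμ0 z)
      have hc : 0 < C * μstar z := mul_pos hC h0
      calc ∑ t : Fin T, d t z / (dbar t z + C * μstar z)
          = ∑ n ∈ Finset.range T,
              g z n / ((∑ i ∈ Finset.range n, g z i) + C * μstar z) := by
            rw [← Fin.sum_univ_eq_sum_range
              (fun n => g z n / ((∑ i ∈ Finset.range n, g z i) + C * μstar z)) T]
            exact Finset.sum_congr rfl fun t _ => by rw [hgt z t, ← hdbar_g z t]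
        _ ≤ 2 * Real.log (T + 1) :=
            log_sum_bound' T (g z) (C * μstar z) hc (hg0 z) (hgc z)
    rw [swap]
    calc (∑' z, ∑ t : Fin T, μstar z * (d t z / (dbar t z + C * μstar z)))
        ≤ ∑' z, μstar z * (2 * Real.log (T + 1)) := by
          apply Summable.tsum_le_tsum hz (summable_sum fun t _ => hSintS t)
            (hμS.mul_right _)
      _ = (∑' z, μstar z) * (2 * Real.log (T + 1)) := tsum_mul_right
      _ = 2 * Real.log (T + 1) := by rw [hμsum, one_mul]
  -- Step C : ∑ bb ≤ 2C
  have stepC : ∑ t : Fin T, bb t ≤ 2 * C := by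
    have swap : ∑ t : Fin T, bb t
        = ∑' z, ∑ t : Fin T, (if dbar t z < C * μstar z then d t z else 0) :=
      (Summable.tsum_finsetSum (fun t _ => hbintS t)).symm
    have hz : ∀ z, (∑ t : Fin T, (if dbar t z < C * μstar z then d t z else 0))
        ≤ 2 * (C * μstar z) := by
      intro z
      rcases eq_or_lt_of_le (hμ0 z) with h0 | h0
      · have hz0 : ∀ t : Fin T, d t z = 0 := by
          intro t
          have h := hdc t z
          rw [← h0, mul_zero] at h
          exact le_antisymm h (hd0 t z)
        have : ∑ t : Fin T, (if dbar t z < C * μstar z then d t z else 0) = 0 :=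
          Finset.sum_eq_zero fun t _ => by rw [hz0 t]; split <;> rfl
        rw [this, ← h0, mul_zero, mul_zero]
      have hc : 0 < C * μstar z := mul_pos hC h0
      calc ∑ t : Fin T, (if dbar t z < C * μstar z then d t z else 0)
          = ∑ n ∈ Finset.range T,
              (if (∑ i ∈ Finset.range n, g z i) < C * μstar z then g z n else 0) := by
            rw [← Fin.sum_univ_eq_sum_range
              (fun n => if (∑ i ∈ Finset.range n, g z i) < C * μstar z
                then g z n else 0) T]
            exact Finset.sum_congr rfl fun t _ => by rw [hgt z t, ← hdbar_g z t]
        _ ≤ 2 * (C * μstar z) := burnin_bound T (g z) (C * μstar z) hc (hg0 z) (hgc z)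
    rw [swap]
    calc (∑' z, ∑ t : Fin T, (if dbar t z < C * μstar z then d t z else 0))
        ≤ ∑' z, 2 * (C * μstar z) := by
          apply Summable.tsum_le_tsum hz (summable_sum fun t _ => hbintS t)
            ((hμS.mul_left C).mul_left 2)
      _ = 2 * (C * ∑' z, μstar z) := by rw [tsum_mul_left, tsum_mul_left]
      _ = 2 * C := by rw [hμsum, mul_one]
  -- conclusion
  calc ∑ t : Fin T, (∑' z, d t z * ψ t z) ^ 2 / max 1 (Q t)
      ≤ ∑ t : Fin T, (4 * C * S t + 2 * bb t) :=
        Finset.sum_le_sum fun t _ => keyA t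
    _ = 4 * C * (∑ t : Fin T, S t) + 2 * (∑ t : Fin T, bb t) := by
        rw [Finset.sum_add_distrib, Finset.mul_sum, Finset.mul_sum]
    _ ≤ 4 * C * (2 * Real.log (T + 1)) + 2 * (2 * C) := by
        apply add_le_add
        · exact mul_le_mul_of_nonneg_left stepB (by linarith)
        · linarith [stepC]
    _ ≤ 16 * C * Real.log (T + 1) + 16 * C := by
        nlinarith [mul_nonneg hC.le hlogT]
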